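/- For every real number k₀, if a polynomial b(t,s) ∈ ℝ[t,s] divides μ(t,s), divides ν_{k₀}(t,s), and divides the product B(t)·B(s)·D(t)·D(s), then b is a unit (a nonzero constant). In other words, no nonconstant polynomial simultaneously divides gcd(μ, ν_{k₀}) and B(t)·B(s)·D(t)·D(s). -/
import Mathlib


/- In ℝ[t,s] (modelled as MvPolynomial (Fin 2) ℝ, with t = X 0 and s = X 1):
`inT p` is p(t), `inS p` is p(s). -/
noncomputable def inT (p : Polynomial ℝ) : MvPolynomial (Fin 2) ℝ :=
  Polynomial.aeval (MvPolynomial.X 0) p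

noncomputable def inS (p : Polynomial ℝ) : MvPolynomial (Fin 2) ℝ :=
  Polynomial.aeval (MvPolynomial.X 1) p

/-- μ(t,s) = A(t)B(s) + A(s)B(t). -/
noncomputable def muPoly (A B : Polynomial ℝ) : MvPolynomial (Fin 2) ℝ :=
  inT A * inS B + inS A * inT B

/-- ν_k(t,s) = C(t)D(s) − C(s)D(t) − (2k+1)π·D(t)D(s). -/
noncomputable def nuPoly (C D : Polynomial ℝ) (k : ℝ) : MvPolynomial (Fin 2) ℝ :=
  inT C * inS D - inS C * inT D -
    MvPolynomial.C ((2 * k + 1) * Real.pi) * (inT D * inS D)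

open MvPolynomial

namespace NoCommonDivAux

/-- The evaluation map sending both variables to X, retracting `inT` and `inS`. -/
noncomputable def ψ : MvPolynomial (Fin 2) ℝ →ₐ[ℝ] Polynomial ℝ :=
  MvPolynomial.aeval ![Polynomial.X, Polynomial.X]

lemma psi_inT (P : Polynomial ℝ) : ψ (inT P) = P := by
  unfold inT
  rw [← Polynomial.aeval_algHom_apply]
  simp [ψ]

lemma psi_inS (P : Polynomial ℝ) : ψ (inS P) = P := by
  unfold inS
  rw [← Polynomial.aeval_algHom_apply]
  simp [ψ]

lemma inT_ne_zero {P : Polynomial ℝ} (hP : P ≠ 0) : inT P ≠ 0 := by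
  intro h
  apply hP
  rw [← psi_inT P, h, map_zero]

lemma inS_ne_zero {P : Polynomial ℝ} (hP : P ≠ 0) : inS P ≠ 0 := by
  intro h
  apply hP
  rw [← psi_inS P, h, map_zero]

lemma degreeOf_one_inT (P : Polynomial ℝ) : degreeOf 1 (inT P) = 0 := by
  unfold inT
  induction P using Polynomial.induction_on' with
  | add p q hp hq =>
    rw [map_add]
    have := degreeOf_add_le 1 (Polynomial.aeval (X 0 : MvPolynomial (Fin 2) ℝ) p)
      (Polynomial.aeval (X 0 : MvPolynomial (Fin 2) ℝ) q)
    omega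
  | monomial n a =>
    rw [Polynomial.aeval_monomial, MvPolynomial.algebraMap_eq]
    have h1 := degreeOf_mul_le 1 (MvPolynomial.C a : MvPolynomial (Fin 2) ℝ)
      ((X 0 : MvPolynomial (Fin 2) ℝ) ^ n)
    have h2 := degreeOf_pow_le 1 (X 0 : MvPolynomial (Fin 2) ℝ) n
    have h3 : degreeOf 1 (MvPolynomial.C a : MvPolynomial (Fin 2) ℝ) = 0 := degreeOf_C a 1
    have h4 : degreeOf 1 (X 0 : MvPolynomial (Fin 2) ℝ) = 0 := by
      rw [degreeOf_X]; norm_num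
    rw [h4, Nat.mul_zero, Nat.le_zero] at h2
    omega

lemma degreeOf_zero_inS (P : Polynomial ℝ) : degreeOf 0 (inS P) = 0 := by
  unfold inS
  induction P using Polynomial.induction_on' with
  | add p q hp hq =>
    rw [map_add]
    have := degreeOf_add_le 0 (Polynomial.aeval (X 1 : MvPolynomial (Fin 2) ℝ) p)
      (Polynomial.aeval (X 1 : MvPolynomial (Fin 2) ℝ) q)
    omega
  | monomial n a =>
    rw [Polynomial.aeval_monomial, MvPolynomial.algebraMap_eq]
    have h1 := degreeOf_mul_le 0 (MvPolynomial.C a : MvPolynomial (Fin 2) ℝ)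
      ((X 1 : MvPolynomial (Fin 2) ℝ) ^ n)
    have h2 := degreeOf_pow_le 0 (X 1 : MvPolynomial (Fin 2) ℝ) n
    have h3 : degreeOf 0 (MvPolynomial.C a : MvPolynomial (Fin 2) ℝ) = 0 := degreeOf_C a 0
    have h4 : degreeOf 0 (X 1 : MvPolynomial (Fin 2) ℝ) = 0 := by
      rw [degreeOf_X]; norm_num
    rw [h4, Nat.mul_zero, Nat.le_zero] at h2
    omega

lemma degreeOf_zero_mul {p q : MvPolynomial (Fin 2) ℝ} (hp : p ≠ 0) (hq : q ≠ 0) :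
    degreeOf 0 (p * q) = degreeOf 0 p + degreeOf 0 q := by
  rw [← natDegree_finSuccEquiv, ← natDegree_finSuccEquiv, ← natDegree_finSuccEquiv, map_mul]
  exact Polynomial.natDegree_mul (by simpa using hp) (by simpa using hq)

lemma degreeOf_one_eq_rename (p : MvPolynomial (Fin 2) ℝ) :
    degreeOf 1 p = degreeOf 0 (rename (Equiv.swap (0 : Fin 2) 1) p) := by
  have h := degreeOf_rename_of_injective
    (Equiv.injective (Equiv.swap (0 : Fin 2) 1)) (p := p) 1
  rw [Equiv.swap_apply_right] at h
  exact h.symm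

lemma degreeOf_one_mul {p q : MvPolynomial (Fin 2) ℝ} (hp : p ≠ 0) (hq : q ≠ 0) :
    degreeOf 1 (p * q) = degreeOf 1 p + degreeOf 1 q := by
  have hrp : rename (Equiv.swap (0 : Fin 2) 1) p ≠ 0 := by
    intro h
    exact hp (by
      have := MvPolynomial.rename_injective (R := ℝ) (Equiv.swap (0 : Fin 2) 1)
        (Equiv.injective _)
      exact this (by rw [h, map_zero]))
  have hrq : rename (Equiv.swap (0 : Fin 2) 1) q ≠ 0 := by
    intro h
    exact hq (by
      have := MvPolynomial.rename_injective (R := ℝ) (Equiv.swap (0 : Fin 2) 1)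
        (Equiv.injective _)
      exact this (by rw [h, map_zero]))
  rw [degreeOf_one_eq_rename, degreeOf_one_eq_rename p, degreeOf_one_eq_rename q, map_mul]
  exact degreeOf_zero_mul hrp hrq

lemma degreeOf_zero_of_dvd {p g : MvPolynomial (Fin 2) ℝ} (hdvd : p ∣ g) (hg : g ≠ 0)
    (h : degreeOf 0 g = 0) : degreeOf 0 p = 0 := by
  obtain ⟨q, rfl⟩ := hdvd
  have hp : p ≠ 0 := fun h' => hg (by rw [h', zero_mul])
  have hq : q ≠ 0 := fun h' => hg (by rw [h', mul_zero])
  rw [degreeOf_zero_mul hp hq] at h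
  omega

lemma degreeOf_one_of_dvd {p g : MvPolynomial (Fin 2) ℝ} (hdvd : p ∣ g) (hg : g ≠ 0)
    (h : degreeOf 1 g = 0) : degreeOf 1 p = 0 := by
  obtain ⟨q, rfl⟩ := hdvd
  have hp : p ≠ 0 := fun h' => hg (by rw [h', zero_mul])
  have hq : q ≠ 0 := fun h' => hg (by rw [h', mul_zero])
  rw [degreeOf_one_mul hp hq] at h
  omega

lemma eq_C_of_degreeOf_eq_zero {p : MvPolynomial (Fin 2) ℝ}
    (h0 : degreeOf 0 p = 0) (h1 : degreeOf 1 p = 0) :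
    ∃ c : ℝ, p = MvPolynomial.C c := by
  refine ⟨coeff 0 p, ?_⟩
  apply MvPolynomial.ext
  intro m
  rw [coeff_C]
  split_ifs with hm
  · rw [← hm]
  · by_contra hc
    have hmem : m ∈ p.support := by
      rw [mem_support_iff]
      intro h'
      exact hc (by rw [h'])
    have hall : ∀ x : Fin 2, m x = 0 := by
      intro x
      have hle := monomial_le_degreeOf x hmem
      have hx : x = 0 ∨ x = 1 := by omega
      rcases hx with rfl | rfl
      · omega
      · omega
    exact hm (Finsupp.ext fun x => (hall x).symm)

lemma not_prime_of_C {p : MvPolynomial (Fin 2) ℝ} (hp : Prime p)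
    (h0 : degreeOf 0 p = 0) (h1 : degreeOf 1 p = 0) : False := by
  obtain ⟨c, rfl⟩ := eq_C_of_degreeOf_eq_zero h0 h1
  have hc : c ≠ 0 := by
    intro h
    apply hp.ne_zero
    rw [h, map_zero]
  exact hp.not_unit ((isUnit_iff_ne_zero.mpr hc).map MvPolynomial.C)

/-- A prime cannot divide both a nonzero polynomial in t and one in s. -/
lemma cross {p : MvPolynomial (Fin 2) ℝ} (hp : Prime p) {P Q : Polynomial ℝ}
    (hP : P ≠ 0) (hQ : Q ≠ 0) (h1 : p ∣ inT P) (h2 : p ∣ inS Q) : False := by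
  exact not_prime_of_C hp
    (degreeOf_zero_of_dvd h2 (inS_ne_zero hQ) (degreeOf_zero_inS Q))
    (degreeOf_one_of_dvd h1 (inT_ne_zero hP) (degreeOf_one_inT P))

lemma bezT {p : MvPolynomial (Fin 2) ℝ} (hp : Prime p) {P Q : Polynomial ℝ}
    (h : IsCoprime P Q) (h1 : p ∣ inT P) (h2 : p ∣ inT Q) : False := by
  obtain ⟨u, v, huv⟩ := h
  have key : inT u * inT P + inT v * inT Q = 1 := by
    unfold inT
    rw [← map_mul, ← map_mul, ← map_add, huv, map_one]
  exact hp.not_unit (isUnit_of_dvd_one (key ▸ dvd_add (h1.mul_left _) (h2.mul_left _)))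

lemma bezS {p : MvPolynomial (Fin 2) ℝ} (hp : Prime p) {P Q : Polynomial ℝ}
    (h : IsCoprime P Q) (h1 : p ∣ inS P) (h2 : p ∣ inS Q) : False := by
  obtain ⟨u, v, huv⟩ := h
  have key : inS u * inS P + inS v * inS Q = 1 := by
    unfold inS
    rw [← map_mul, ← map_mul, ← map_add, huv, map_one]
  exact hp.not_unit (isUnit_of_dvd_one (key ▸ dvd_add (h1.mul_left _) (h2.mul_left _)))

end NoCommonDivAux

open NoCommonDivAux in
/- STATEMENT 4: For every real k₀, a common divisor of μ, ν_{k₀} and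
B(t)·B(s)·D(t)·D(s) must be a unit. -/
theorem no_common_divisor_mu_nu_denominators
    (A B C D : Polynomial ℝ) (hB : B ≠ 0) (hD : D ≠ 0)
    (hAB : IsCoprime A B) (hCD : IsCoprime C D) (k₀ : ℝ)
    (b : MvPolynomial (Fin 2) ℝ)
    (hb1 : b ∣ muPoly A B) (hb2 : b ∣ nuPoly C D k₀)
    (hb3 : b ∣ inT B * inS B * inT D * inS D) :
    IsUnit b := by
  have hprod : inT B * inS B * inT D * inS D ≠ 0 :=
    mul_ne_zero (mul_ne_zero (mul_ne_zero (inT_ne_zero hB) (inS_ne_zero hB))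
      (inT_ne_zero hD)) (inS_ne_zero hD)
  by_contra hu
  have hb0 : b ≠ 0 := by
    rintro rfl
    exact hprod (zero_dvd_iff.mp hb3)
  obtain ⟨p, hpirr, hpb⟩ := WfDvdMonoid.exists_irreducible_factor hu hb0
  have hp : Prime p := UniqueFactorizationMonoid.irreducible_iff_prime.mp hpirr
  have hpμ : p ∣ muPoly A B := hpb.trans hb1
  have hpν : p ∣ nuPoly C D k₀ := hpb.trans hb2
  have hpprod : p ∣ inT B * inS B * inT D * inS D := hpb.trans hb3
  rcases hp.dvd_mul.mp hpprod with h3 | hsD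
  · rcases hp.dvd_mul.mp h3 with h2 | htD
    · rcases hp.dvd_mul.mp h2 with htB | hsB
      · -- p ∣ inT B
        have key : p ∣ inT A * inS B := by
          have e : muPoly A B - inS A * inT B = inT A * inS B := by unfold muPoly; ring
          exact e ▸ dvd_sub hpμ (htB.mul_left _)
        rcases hp.dvd_mul.mp key with h | h
        · exact absurd (bezT hp hAB h htB) not_false
        · exact absurd (cross hp hB hB htB h) not_false
      · -- p ∣ inS B
        have key : p ∣ inS A * inT B := by
          have e : muPoly A B - inT A * inS B = inS A * inT B := by unfold muPoly; ring
          exact e ▸ dvd_sub hpμ (hsB.mul_left _)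
        rcases hp.dvd_mul.mp key with h | h
        · exact absurd (bezS hp hAB h hsB) not_false
        · exact absurd (cross hp hB hB h hsB) not_false
    · -- p ∣ inT D
      have key : p ∣ inT C * inS D := by
        have e : nuPoly C D k₀ + inS C * inT D
            + MvPolynomial.C ((2 * k₀ + 1) * Real.pi) * (inT D * inS D)
            = inT C * inS D := by unfold nuPoly; ring
        exact e ▸ dvd_add (dvd_add hpν (htD.mul_left _))
          ((htD.mul_right (inS D)).mul_left _)
      rcases hp.dvd_mul.mp key with h | h
      · exact absurd (bezT hp hCD h htD) not_false
      · exact absurd (cross hp hD hD htD h) not_false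
  · -- p ∣ inS D
    have key : p ∣ inS C * inT D := by
      have e : inT C * inS D - nuPoly C D k₀
          - MvPolynomial.C ((2 * k₀ + 1) * Real.pi) * (inT D * inS D)
          = inS C * inT D := by unfold nuPoly; ring
      exact e ▸ dvd_sub (dvd_sub (hsD.mul_left _) hpν) ((hsD.mul_left (inT D)).mul_left _)
    rcases hp.dvd_mul.mp key with h | h
    · exact absurd (bezS hp hCD h hsD) not_false
    · exact absurd (cross hp hD hD h hsD) not_false
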